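/- Let P₁ be a real m×r̃ matrix, P₂ a real n×r̃ matrix, S₁ a real m×s matrix, S₂ a real n×s matrix, and B a real m×n matrix. Suppose Range(B) ⊆ Range(P₁), Range(Bᵀ) ⊆ Range(P₂), Range((S₁ᵀ P₁)ᵀ) = Range(P₁ᵀ), and Range((S₂ᵀ P₂)ᵀ) = Range(P₂ᵀ). Define A₁ = S₁ᵀ P₁, A₂ = S₂ᵀ P₂, and G = A₁† (S₁ᵀ B S₂) (A₂†)ᵀ. Then P₁ G P₂ᵀ = B. -/

import Mathlib

open Matrix MeasureTheory ProbabilityTheory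

noncomputable def specNorm {m n : ℕ} (A : Matrix (Fin m) (Fin n) ℝ) : ℝ :=
  ‖LinearMap.toContinuousLinearMap (Matrix.toEuclideanLin A)‖

noncomputable def frobNorm {m n : ℕ} (A : Matrix (Fin m) (Fin n) ℝ) : ℝ :=
  Real.sqrt (∑ i, ∑ j, (A i j) ^ 2)

/-- The column space (range) of a real matrix. -/
def colSpace {m n : ℕ} (A : Matrix (Fin m) (Fin n) ℝ) : Submodule ℝ (Fin m → ℝ) :=
  LinearMap.range A.mulVecLin

/-- `G` is the Moore-Penrose pseudoinverse of `A`. -/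
def IsMPInv {m n : ℕ} (A : Matrix (Fin m) (Fin n) ℝ) (G : Matrix (Fin n) (Fin m) ℝ) : Prop :=
  A * G * A = A ∧ G * A * G = G ∧ (A * G)ᵀ = A * G ∧ (G * A)ᵀ = G * A

lemma colSpace_factor {m n k : ℕ} {A : Matrix (Fin m) (Fin n) ℝ}
    {P : Matrix (Fin m) (Fin k) ℝ} (h : colSpace A ≤ colSpace P) :
    ∃ X : Matrix (Fin k) (Fin n) ℝ, A = P * X := by
  have hcol : ∀ j, ∃ v : Fin k → ℝ, P.mulVec v = fun i => A i j := by
    intro j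
    have hmem : (fun i => A i j) ∈ colSpace A := by
      refine ⟨Pi.single j 1, ?_⟩
      ext i
      simp [Matrix.mulVecLin_apply, Matrix.mulVec_single]
    exact h hmem
  choose v hv using hcol
  refine ⟨fun i j => v j i, ?_⟩
  ext i j
  have := congrFun (hv j) i
  simp only [Matrix.mulVec, dotProduct] at this
  simp [Matrix.mul_apply, ← this]
  rfl

theorem stmt16 {m n rt s : ℕ}
    (P₁ : Matrix (Fin m) (Fin rt) ℝ) (P₂ : Matrix (Fin n) (Fin rt) ℝ)
    (S₁ : Matrix (Fin m) (Fin s) ℝ) (S₂ : Matrix (Fin n) (Fin s) ℝ)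
    (B : Matrix (Fin m) (Fin n) ℝ)
    (hB1 : colSpace B ≤ colSpace P₁) (hB2 : colSpace Bᵀ ≤ colSpace P₂)
    (hS1 : colSpace (S₁ᵀ * P₁)ᵀ = colSpace P₁ᵀ)
    (hS2 : colSpace (S₂ᵀ * P₂)ᵀ = colSpace P₂ᵀ)
    (A₁ : Matrix (Fin s) (Fin rt) ℝ) (hA₁ : A₁ = S₁ᵀ * P₁)
    (A₂ : Matrix (Fin s) (Fin rt) ℝ) (hA₂ : A₂ = S₂ᵀ * P₂)
    (A₁d : Matrix (Fin rt) (Fin s) ℝ) (hA₁d : IsMPInv A₁ A₁d)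
    (A₂d : Matrix (Fin rt) (Fin s) ℝ) (hA₂d : IsMPInv A₂ A₂d)
    (G : Matrix (Fin rt) (Fin rt) ℝ) (hG : G = A₁d * (S₁ᵀ * B * S₂) * A₂dᵀ) :
    P₁ * G * P₂ᵀ = B := by
  obtain ⟨X, hX⟩ := colSpace_factor hB1
  obtain ⟨Y, hY⟩ := colSpace_factor hB2
  obtain ⟨Z, hZ⟩ := colSpace_factor hS1.ge
  obtain ⟨W, hW⟩ := colSpace_factor hS2.ge
  have hP1 : P₁ = Zᵀ * A₁ := by
    have := congrArg Matrix.transpose hZ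
    simpa [Matrix.transpose_mul, hA₁] using this
  have hP2 : P₂ = Wᵀ * A₂ := by
    have := congrArg Matrix.transpose hW
    simpa [Matrix.transpose_mul, hA₂] using this
  have hB' : B = Yᵀ * P₂ᵀ := by
    have := congrArg Matrix.transpose hY
    simpa [Matrix.transpose_mul] using this
  have h1 : P₁ * A₁d * A₁ = P₁ := by
    calc P₁ * A₁d * A₁ = Zᵀ * (A₁ * A₁d * A₁) := by
          rw [hP1]; simp only [Matrix.mul_assoc]
      _ = Zᵀ * A₁ := by rw [hA₁d.1]
      _ = P₁ := hP1.symm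
  have h2 : P₂ * A₂d * A₂ = P₂ := by
    calc P₂ * A₂d * A₂ = Wᵀ * (A₂ * A₂d * A₂) := by
          rw [hP2]; simp only [Matrix.mul_assoc]
      _ = Wᵀ * A₂ := by rw [hA₂d.1]
      _ = P₂ := hP2.symm
  have h2' : A₂ᵀ * (A₂dᵀ * P₂ᵀ) = P₂ᵀ := by
    have := congrArg Matrix.transpose h2
    simpa [Matrix.transpose_mul, Matrix.mul_assoc] using this
  -- left step : P₁ * A₁d * S₁ᵀ * B = B
  have e1 : P₁ * (A₁d * (S₁ᵀ * B)) = B := by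
    calc P₁ * (A₁d * (S₁ᵀ * B)) = P₁ * A₁d * A₁ * X := by
          rw [hX, hA₁]; simp only [Matrix.mul_assoc]
      _ = P₁ * X := by rw [h1]
      _ = B := hX.symm
  -- right step : B * (S₂ * (A₂dᵀ * P₂ᵀ)) = B
  have e2 : B * (S₂ * (A₂dᵀ * P₂ᵀ)) = B := by
    calc B * (S₂ * (A₂dᵀ * P₂ᵀ)) = Yᵀ * (P₂ᵀ * (S₂ * (A₂dᵀ * P₂ᵀ))) := by
          rw [hB']; simp only [Matrix.mul_assoc]
      _ = Yᵀ * (A₂ᵀ * (A₂dᵀ * P₂ᵀ)) := by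
          have h : P₂ᵀ * S₂ = A₂ᵀ := by rw [hA₂, Matrix.transpose_mul, Matrix.transpose_transpose]
          rw [← Matrix.mul_assoc P₂ᵀ S₂, h]
      _ = Yᵀ * P₂ᵀ := by rw [h2']
      _ = B := hB'.symm
  calc P₁ * G * P₂ᵀ
      = P₁ * (A₁d * (S₁ᵀ * B)) * (S₂ * (A₂dᵀ * P₂ᵀ)) := by
        rw [hG]; simp only [Matrix.mul_assoc]
    _ = B * (S₂ * (A₂dᵀ * P₂ᵀ)) := by rw [e1]
    _ = B := e2
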